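/- Let M be a matroid with basis B. Then for any two subsets U, V of B, the intersection of the closures of U and V equals the closure of U ∩ V, i.e., cl(U) ∩ cl(V) = cl(U ∩ V). -/

import Mathlib

theorem closure_inter_closure_of_subset_base {α : Type*} (M : Matroid α)
    (B : Set α) (hB : M.IsBase B) (U V : Set α) (hU : U ⊆ B) (hV : V ⊆ B) :
    M.closure U ∩ M.closure V = M.closure (U ∩ V) := by
  exact ((hB.indep.subset (Set.union_subset hU hV)).closure_inter_eq_inter_closure).symm
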